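/- Let x₁ ~ N(0, 1/n) scalar, β₁ deterministic with β₁/√n → γ > 0, and A | x₁ ~ Bernoulli(σ(x₁β₁)). Then lim_{n→∞} E[√n·x₁ | A = 1] = 2·E[z/(1+e^{-γz})], where z ~ N(0,1). -/

import Mathlib

open MeasureTheory ProbabilityTheory Filter

/-- The logistic sigmoid function. -/
noncomputable def sig (t : ℝ) : ℝ := 1 / (1 + Real.exp (-t))

lemma sig_pos_denom (t : ℝ) : (0:ℝ) < 1 + Real.exp (-t) := by positivity

lemma continuous_sig : Continuous sig := by
  apply Continuous.div continuous_const
  · continuity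
  · exact fun t => ne_of_gt (sig_pos_denom t)

lemma sig_nonneg (t : ℝ) : 0 ≤ sig t := by
  unfold sig; positivity

lemma sig_le_one (t : ℝ) : sig t ≤ 1 := by
  unfold sig
  rw [div_le_one (sig_pos_denom t)]
  nlinarith [Real.exp_pos (-t)]

lemma abs_sig_le_one (t : ℝ) : |sig t| ≤ 1 := by
  rw [abs_of_nonneg (sig_nonneg t)]; exact sig_le_one t

lemma sig_add_sig_neg (t : ℝ) : sig t + sig (-t) = 1 := by
  unfold sig
  rw [neg_neg]
  have h1 := sig_pos_denom t
  have h2 : (0:ℝ) < 1 + Real.exp t := by positivity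
  have he : Real.exp (-t) * Real.exp t = 1 := by
    rw [← Real.exp_add]; simp
  field_simp
  nlinarith

lemma integrable_id_gaussian : Integrable (fun z : ℝ => z) (gaussianReal 0 1) := by
  rw [gaussianReal_of_var_ne_zero 0 one_ne_zero]
  rw [integrable_withDensity_iff (measurable_gaussianPDF 0 1)
    (Filter.Eventually.of_forall fun x => ENNReal.ofReal_lt_top)]
  have : (fun x : ℝ => x * (gaussianPDF 0 1 x).toReal)
      = fun x : ℝ => (Real.sqrt (2 * Real.pi))⁻¹ • (x * Real.exp (-(2⁻¹ : ℝ) * x ^ 2)) := by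
    funext x
    rw [gaussianPDF, ENNReal.toReal_ofReal (gaussianPDFReal_nonneg _ _ _), gaussianPDFReal]
    push_cast
    rw [smul_eq_mul]
    ring_nf
  rw [this]
  exact (integrable_mul_exp_neg_mul_sq (b := 2⁻¹) (by norm_num)).smul ((Real.sqrt (2 * Real.pi))⁻¹)

lemma integrable_sig_comp {v : NNReal} (c : ℝ) :
    Integrable (fun x : ℝ => sig (x * c)) (gaussianReal 0 v) := by
  refine Integrable.mono' (integrable_const 1)
    ((continuous_sig.comp (continuous_id.mul continuous_const)).aestronglyMeasurable) ?_
  exact Filter.Eventually.of_forall fun x => by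
    simpa [Real.norm_eq_abs] using abs_sig_le_one (x * c)

lemma gaussian_map_neg {v : NNReal} :
    (gaussianReal 0 v).map (fun x : ℝ => -x) = gaussianReal 0 v := by
  have h := gaussianReal_map_const_mul (μ := 0) (v := v) (-1)
  have h1 : (⟨(-1:ℝ)^2, sq_nonneg _⟩ : NNReal) = 1 := by ext; norm_num
  have h2 : (fun x : ℝ => -x) = ((-1 : ℝ) * ·) := by funext x; ring
  rw [h2]
  simpa [h1] using h

lemma integral_sig_gaussian {v : NNReal} (hv : v ≠ 0) (c : ℝ) :
    ∫ x, sig (x * c) ∂(gaussianReal 0 v) = 1 / 2 := by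
  set μ := gaussianReal 0 v with hμ
  have hmeas : AEStronglyMeasurable (fun x : ℝ => sig (x * c)) μ :=
    (continuous_sig.comp (continuous_id.mul continuous_const)).aestronglyMeasurable
  have hsym : ∫ x, sig (x * c) ∂μ = ∫ x, sig (-(x * c)) ∂μ := by
    conv_lhs => rw [hμ, ← gaussian_map_neg (v := v)]
    rw [integral_map measurable_neg.aemeasurable]
    · simp [neg_mul]; rfl
    · rw [gaussian_map_neg]; exact hmeas
  have hint := integrable_sig_comp (v := v) c
  have hint' : Integrable (fun x : ℝ => sig (-(x * c))) μ := by
    have := integrable_sig_comp (v := v) (-c)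
    simpa [mul_neg, neg_mul] using this
  have hsum : (∫ x, sig (x * c) ∂μ) + (∫ x, sig (-(x * c)) ∂μ) = 1 := by
    rw [← integral_add hint hint']
    have : (fun x : ℝ => sig (x * c) + sig (-(x * c))) = fun _ => (1:ℝ) := by
      funext x; exact sig_add_sig_neg (x * c)
    rw [this]
    have : IsProbabilityMeasure μ := by
      unfold μ; infer_instance
    simp
  linarith [hsym, hsum]

lemma gaussian_map_scale {n : ℕ} (hn : 1 ≤ n) :
    (gaussianReal 0 1).map (((Real.sqrt n)⁻¹ : ℝ) * ·) = gaussianReal 0 (n : NNReal)⁻¹ := by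
  have h := gaussianReal_map_const_mul (μ := 0) (v := 1) ((Real.sqrt n)⁻¹)
  have hn0 : (0:ℝ) < n := by exact_mod_cast hn
  have h1 : (⟨((Real.sqrt n)⁻¹:ℝ)^2, sq_nonneg _⟩ : NNReal) * 1 = (n : NNReal)⁻¹ := by
    ext
    push_cast
    rw [mul_one, inv_pow, Real.sq_sqrt hn0.le]
    simp
  rw [mul_zero] at h
  rw [h]
  congr 1

/-- For `x₁ ~ N(0, 1/n)`, `β₁(n)/√n → γ > 0`, and `A | x₁ ~ Bernoulli(σ(x₁β₁))`,
`E[√n x₁ | A = 1] = E[√n x₁ σ(x₁β₁)] / E[σ(x₁β₁)] → 2 E[z σ(γ z)]` with `z ~ N(0,1)`. -/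
theorem conditional_expectation_limit (β₁ : ℕ → ℝ) (γ : ℝ) (hγ : 0 < γ)
    (hβ : Tendsto (fun n => β₁ n / Real.sqrt n) atTop (nhds γ)) :
    Tendsto (fun n : ℕ =>
        (∫ x, Real.sqrt n * x * sig (x * β₁ n) ∂(gaussianReal 0 (n : NNReal)⁻¹)) /
        (∫ x, sig (x * β₁ n) ∂(gaussianReal 0 (n : NNReal)⁻¹)))
      atTop (nhds (2 * ∫ z, z * sig (γ * z) ∂(gaussianReal 0 1))) := by
  set c : ℕ → ℝ := fun n => β₁ n / Real.sqrt n with hc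
  -- Dominated convergence for the numerator (after change of variables)
  have hdct : Tendsto (fun n => ∫ z, z * sig (z * c n) ∂(gaussianReal 0 1)) atTop
      (nhds (∫ z, z * sig (γ * z) ∂(gaussianReal 0 1))) := by
    refine tendsto_integral_of_dominated_convergence (fun z => |z|)
      (fun n => (continuous_id.mul
        (continuous_sig.comp (continuous_id.mul continuous_const))).aestronglyMeasurable)
      integrable_id_gaussian.abs ?_ ?_
    · intro n
      refine Filter.Eventually.of_forall fun z => ?_
      rw [Real.norm_eq_abs, abs_mul]
      calc |z| * |sig (z * c n)| ≤ |z| * 1 :=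
            mul_le_mul_of_nonneg_left (abs_sig_le_one _) (abs_nonneg z)
        _ = |z| := mul_one _
    · refine Filter.Eventually.of_forall fun z => ?_
      have h1 : Tendsto (fun n => z * c n) atTop (nhds (z * γ)) := hβ.const_mul z
      have h2 : Tendsto (fun n => sig (z * c n)) atTop (nhds (sig (z * γ))) :=
        (continuous_sig.tendsto _).comp h1
      have := h2.const_mul z
      simpa [mul_comm γ z] using this
  -- The expression equals 2 * numerator for n ≥ 1
  have heq : ∀ᶠ n : ℕ in atTop,
      (∫ x, Real.sqrt n * x * sig (x * β₁ n) ∂(gaussianReal 0 (n : NNReal)⁻¹)) /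
        (∫ x, sig (x * β₁ n) ∂(gaussianReal 0 (n : NNReal)⁻¹))
      = 2 * ∫ z, z * sig (z * c n) ∂(gaussianReal 0 1) := by
    filter_upwards [eventually_ge_atTop 1] with n hn
    have hn0 : (0:ℝ) < n := by exact_mod_cast hn
    have hs : (0:ℝ) < Real.sqrt n := Real.sqrt_pos.mpr hn0
    have hvne : ((n : NNReal))⁻¹ ≠ 0 :=
      inv_ne_zero (Nat.cast_ne_zero.mpr (by omega))
    -- denominator
    rw [integral_sig_gaussian hvne]
    -- numerator change of variables
    have hnum : (∫ x, Real.sqrt n * x * sig (x * β₁ n) ∂(gaussianReal 0 (n : NNReal)⁻¹))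
        = ∫ z, z * sig (z * c n) ∂(gaussianReal 0 1) := by
      rw [← gaussian_map_scale hn,
        integral_map (measurable_const_mul _).aemeasurable]
      · congr 1
        funext z
        have h1 : Real.sqrt n * ((Real.sqrt n)⁻¹ * z) = z := by
          field_simp
        have h2 : (Real.sqrt n)⁻¹ * z * β₁ n = z * c n := by
          rw [hc]; field_simp
        rw [h1, h2]
      · rw [gaussian_map_scale hn]
        exact ((continuous_const.mul continuous_id).mul
          (continuous_sig.comp (continuous_id.mul continuous_const))).aestronglyMeasurable
    rw [hnum]
    ring
  exact Tendsto.congr' (Filter.EventuallyEq.symm heq) (hdct.const_mul 2)
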